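/- Let g be a Lie algebra with linear maps B₁, B₂: g → g, and set φ = B₁ + B₂ and R = B₁ − B₂. Then (g, B₁, B₂) is a Rota-Baxter system of Lie algebras if and only if the pair (R, φ) satisfies the twisted modified Yang-Baxter equations: [R(u),R(v)] + [φ(u),φ(v)] = R([R(u),φ(v)] + [φ(u),R(v)]) and [R(u),φ(v)] + [φ(u),R(v)] = φ([R(u),φ(v)] + [φ(u),R(v)]) for all u,v ∈ g. -/
import Mathlib


theorem stmt_19 {K : Type*} {g : Type*} [Field K] [LieRing g] [LieAlgebra K g]
    (hchar : (2 : K) ≠ 0)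
    (B₁ B₂ : g →ₗ[K] g) (R φ : g →ₗ[K] g) (hR : R = B₁ - B₂) (hφ : φ = B₁ + B₂) :
    ((∀ u v : g, ⁅B₁ u, B₁ v⁆ = B₁ (⁅B₁ u, B₁ v⁆ - ⁅B₂ u, B₂ v⁆)) ∧
     (∀ u v : g, ⁅B₂ v, B₂ u⁆ = B₂ (⁅B₁ u, B₁ v⁆ - ⁅B₂ u, B₂ v⁆))) ↔
    ((∀ u v : g, ⁅R u, R v⁆ + ⁅φ u, φ v⁆ = R (⁅R u, φ v⁆ + ⁅φ u, R v⁆)) ∧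
     (∀ u v : g, ⁅R u, φ v⁆ + ⁅φ u, R v⁆ = φ (⁅R u, φ v⁆ + ⁅φ u, R v⁆))) := by
  subst hR hφ
  have h4 : (4 : K) ≠ 0 := by
    intro h
    apply hchar
    have : (4 : K) = 2 * 2 := by norm_num
    rcases mul_eq_zero.mp (this ▸ h) with h | h <;> exact h
  constructor
  · rintro ⟨h1, h2⟩
    constructor <;> intro u v <;>
    [skip; skip] <;>
    · have h1' := h1 u v
      have h2' := h2 u v
      rw [← lie_skew] at h2'
      simp only [LinearMap.sub_apply, LinearMap.add_apply, sub_lie, lie_sub, add_lie,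
        lie_add, map_sub, map_add] at h1' h2' ⊢
      first
      | linear_combination (norm := module) (2 : K) • h1' - (2 : K) • h2'
      | linear_combination (norm := module) (2 : K) • h1' + (2 : K) • h2'
  · rintro ⟨e1, e2⟩
    have key : ∀ u v : g,
        (4 : K) • ⁅B₁ u, B₁ v⁆ = (4 : K) • (B₁ ⁅B₁ u, B₁ v⁆ - B₁ ⁅B₂ u, B₂ v⁆) ∧
        (4 : K) • ⁅B₂ u, B₂ v⁆ = (4 : K) • (B₂ ⁅B₂ u, B₂ v⁆ - B₂ ⁅B₁ u, B₁ v⁆) := by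
      intro u v
      have e1' := e1 u v
      have e2' := e2 u v
      simp only [LinearMap.sub_apply, LinearMap.add_apply, sub_lie, lie_sub, add_lie,
        lie_add, map_sub, map_add] at e1' e2'
      constructor
      · linear_combination (norm := module) e1' + e2'
      · linear_combination (norm := module) e1' - e2'
    constructor <;> intro u v
    · have := (key u v).1
      have h := smul_right_injective g h4 this
      simpa [map_sub] using h
    · have := (key u v).2
      have h := smul_right_injective g h4 this
      rw [← lie_skew]
      simp only [map_sub]
      linear_combination (norm := module) -h
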